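/- Let Γ be a discrete group having no finite confined subgroups. Then the property of being a confined subgroup of Γ is a commensurability invariant: if Δ ≤ Γ is confined and Δ₁ ≤ Δ has finite index in Δ, then Δ₁ is confined in Γ. -/

import Mathlib

/-- A subgroup `Λ` of a discrete group `Γ` is confined if some finite set of nontrivial
elements meets every conjugate of `Λ`. -/
def IsConfinedSubgroup {Γ : Type*} [Group Γ] (Λ : Subgroup Γ) : Prop :=
  ∃ S : Finset Γ, (1 : Γ) ∉ S ∧ ∀ γ : Γ, ∃ s ∈ S, γ⁻¹ * s * γ ∈ Λ

/-- In a group without finite confined subgroups, being confined is a commensurability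
invariant: a finite-index subgroup of a confined subgroup is confined. -/
theorem confined_of_finiteIndex {Γ : Type*} [Group Γ]
    (hnofin : ∀ F : Subgroup Γ, (F : Set Γ).Finite → ¬ IsConfinedSubgroup F)
    (Δ Δ₁ : Subgroup Γ) (hle : Δ₁ ≤ Δ) (hfi : Δ₁.relIndex Δ ≠ 0)
    (hΔ : IsConfinedSubgroup Δ) : IsConfinedSubgroup Δ₁ := by
  classical
  by_contra h
  unfold IsConfinedSubgroup at h
  push_neg at h
  -- for each nontrivial g, the set of conjugators moving g out of Δ₁
  set A : Γ → Set Γ := fun g => {γ | γ⁻¹ * g * γ ∉ Δ₁} with hA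
  -- the family {A g : g ≠ 1} has the finite intersection property
  obtain ⟨U, hU⟩ : ∃ U : Ultrafilter Γ, A '' {g | g ≠ 1} ⊆ U.sets := by
    apply Ultrafilter.exists_ultrafilter_of_finite_inter_nonempty
    intro T hT
    have hch : ∀ t ∈ T, ∃ g, g ≠ 1 ∧ A g = t := by
      intro t ht
      obtain ⟨g, hg, hgt⟩ := hT ht
      exact ⟨g, hg, hgt⟩
    choose gf hg1 hgA using hch
    set G : Finset Γ := T.attach.image (fun t => gf t.1 t.2) with hG
    have h1G : (1 : Γ) ∉ G := by
      intro hmem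
      rw [hG, Finset.mem_image] at hmem
      obtain ⟨t, _, ht⟩ := hmem
      exact hg1 t.1 t.2 ht
    obtain ⟨γ, hγ⟩ := h G h1G
    refine ⟨γ, ?_⟩
    rintro t ht
    have : γ ∈ A (gf t ht) := by
      have : gf t ht ∈ G := by
        rw [hG, Finset.mem_image]
        exact ⟨⟨t, ht⟩, Finset.mem_attach _ _, rfl⟩
      exact hγ _ this
    rw [hgA t ht] at this
    exact this
  -- the "ultrafilter limit" of the conjugates of Δ
  set F : Subgroup Γ :=
    { carrier := {g | {γ | γ⁻¹ * g * γ ∈ Δ} ∈ U}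
      one_mem' := by
        show {γ : Γ | γ⁻¹ * 1 * γ ∈ Δ} ∈ U
        have : {γ : Γ | γ⁻¹ * 1 * γ ∈ Δ} = Set.univ := by
          ext γ; simp [Δ.one_mem]
        rw [this]; exact Filter.univ_mem
      mul_mem' := by
        intro a b ha hb
        simp only [Set.mem_setOf_eq] at *
        filter_upwards [ha, hb] with γ h1 h2
        have : γ⁻¹ * (a * b) * γ = (γ⁻¹ * a * γ) * (γ⁻¹ * b * γ) := by group
        rw [this]; exact Δ.mul_mem h1 h2
      inv_mem' := by
        intro a ha
        simp only [Set.mem_setOf_eq] at *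
        filter_upwards [ha] with γ h1
        have : γ⁻¹ * a⁻¹ * γ = (γ⁻¹ * a * γ)⁻¹ := by group
        rw [this]; exact Δ.inv_mem h1 } with hF
  -- key cardinality bound: F has at most relindex many elements, hence is finite
  have hQfin : Finite (Δ ⧸ Δ₁.subgroupOf Δ) := by
    have := hfi
    rw [Subgroup.relIndex, Subgroup.index] at this
    exact (Nat.card_ne_zero.mp this).2
  have hFfin : (F : Set Γ).Finite := by
    by_contra hinf
    have hinf : (F : Set Γ).Infinite := hinf
    have hQ : Fintype (Δ ⧸ Δ₁.subgroupOf Δ) := Fintype.ofFinite _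
    obtain ⟨t, hts, htc⟩ := hinf.exists_subset_card_eq
      (Fintype.card (Δ ⧸ Δ₁.subgroupOf Δ) + 1)
    -- the set of γ conjugating all of t into Δ belongs to U
    have hbig : {γ : Γ | ∀ g ∈ t, γ⁻¹ * g * γ ∈ Δ} ∈ U := by
      have : {γ : Γ | ∀ g ∈ t, γ⁻¹ * g * γ ∈ Δ} = ⋂ g ∈ t, {γ | γ⁻¹ * g * γ ∈ Δ} := by
        ext γ; simp
      rw [this]
      exact (Filter.biInter_finset_mem t).mpr (fun g hg => hts hg)
    -- for each such γ, pigeonhole gives a colliding pair in t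
    have hcover : {γ : Γ | ∀ g ∈ t, γ⁻¹ * g * γ ∈ Δ} ⊆
        ⋃ p ∈ ((t ×ˢ t : Finset (Γ × Γ)).filter (fun p => p.1 ≠ p.2) : Set (Γ × Γ)),
          {γ : Γ | γ⁻¹ * (p.1⁻¹ * p.2) * γ ∈ Δ₁} := by
      intro γ hγ
      simp only [Set.mem_setOf_eq] at hγ
      set f : ↥t → Δ ⧸ Δ₁.subgroupOf Δ := fun g =>
        QuotientGroup.mk ⟨γ⁻¹ * (g : Γ) * γ, hγ g g.2⟩ with hf
      have hlt : Fintype.card (Δ ⧸ Δ₁.subgroupOf Δ) < Fintype.card ↥t := by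
        rw [Fintype.card_coe, htc]; omega
      obtain ⟨a, b, hab, hfab⟩ := Fintype.exists_ne_map_eq_of_card_lt f hlt
      have hmem : ((⟨γ⁻¹ * (a : Γ) * γ, hγ a a.2⟩ : Δ))⁻¹ *
          (⟨γ⁻¹ * (b : Γ) * γ, hγ b b.2⟩ : Δ) ∈ Δ₁.subgroupOf Δ := by
        rw [← QuotientGroup.eq]
        exact hfab
      rw [Subgroup.mem_subgroupOf] at hmem
      have hmem' : γ⁻¹ * ((a : Γ)⁻¹ * (b : Γ)) * γ ∈ Δ₁ := by
        have : ((((⟨γ⁻¹ * (a : Γ) * γ, hγ a a.2⟩ : Δ))⁻¹ *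
            (⟨γ⁻¹ * (b : Γ) * γ, hγ b b.2⟩ : Δ) : Δ) : Γ) =
            γ⁻¹ * ((a : Γ)⁻¹ * (b : Γ)) * γ := by
          push_cast
          group
        rwa [this] at hmem
      have hpair : ((a : Γ), (b : Γ)) ∈ (t ×ˢ t : Finset (Γ × Γ)).filter (fun p => p.1 ≠ p.2) := by
        rw [Finset.mem_filter, Finset.mem_product]
        exact ⟨⟨a.2, b.2⟩, Subtype.coe_injective.ne hab⟩
      exact Set.mem_biUnion hpair hmem'
    have hunion : (⋃ p ∈ ((t ×ˢ t : Finset (Γ × Γ)).filter (fun p => p.1 ≠ p.2) : Set (Γ × Γ)),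
        {γ : Γ | γ⁻¹ * (p.1⁻¹ * p.2) * γ ∈ Δ₁}) ∈ U :=
      Filter.mem_of_superset hbig hcover
    rw [Ultrafilter.finite_biUnion_mem_iff (Finset.finite_toSet _)] at hunion
    obtain ⟨⟨a, b⟩, hpmem, hpU⟩ := hunion
    simp only [Finset.coe_filter, Set.mem_setOf_eq, Finset.mem_product] at hpmem
    obtain ⟨⟨hat, hbt⟩, hne⟩ := hpmem
    -- but this contradicts A (a⁻¹ * b) ∈ U
    have hgne : a⁻¹ * b ≠ 1 := by
      intro hcon
      exact hne (by rw [← mul_one a, ← hcon]; group)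
    have hAg : A (a⁻¹ * b) ∈ U := hU ⟨a⁻¹ * b, hgne, rfl⟩
    have : (A (a⁻¹ * b) ∩ {γ : Γ | γ⁻¹ * (a⁻¹ * b) * γ ∈ Δ₁}).Nonempty :=
      Ultrafilter.nonempty_of_mem (Filter.inter_mem hAg hpU)
    obtain ⟨γ, hγ1, hγ2⟩ := this
    exact hγ1 hγ2
  -- F is confined (with the same witness set as Δ)
  obtain ⟨S, hS1, hS⟩ := hΔ
  refine hnofin F hFfin ⟨S, hS1, ?_⟩
  intro γ₀
  have hcov : (Set.univ : Set Γ) ⊆ ⋃ s ∈ (S : Set Γ), {γ : Γ | (γ₀ * γ)⁻¹ * s * (γ₀ * γ) ∈ Δ} := by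
    intro γ _
    obtain ⟨s, hsS, hs⟩ := hS (γ₀ * γ)
    exact Set.mem_biUnion (Finset.mem_coe.mpr hsS) hs
  have : (⋃ s ∈ (S : Set Γ), {γ : Γ | (γ₀ * γ)⁻¹ * s * (γ₀ * γ) ∈ Δ}) ∈ U :=
    Filter.mem_of_superset Filter.univ_mem hcov
  rw [Ultrafilter.finite_biUnion_mem_iff (Finset.finite_toSet _)] at this
  obtain ⟨s, hsS, hsU⟩ := this
  refine ⟨s, hsS, ?_⟩
  show {γ : Γ | γ⁻¹ * (γ₀⁻¹ * s * γ₀) * γ ∈ Δ} ∈ U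
  have heq : ∀ γ : Γ, γ⁻¹ * (γ₀⁻¹ * s * γ₀) * γ = (γ₀ * γ)⁻¹ * s * (γ₀ * γ) := by
    intro γ; group
  have : {γ : Γ | γ⁻¹ * (γ₀⁻¹ * s * γ₀) * γ ∈ Δ} =
      {γ : Γ | (γ₀ * γ)⁻¹ * s * (γ₀ * γ) ∈ Δ} := by
    ext γ; rw [Set.mem_setOf_eq, Set.mem_setOf_eq, heq γ]
  rw [this]
  exact hsU
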